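/- Let λ ≥ 0, f ∈ L¹([0,1], r dr), L ∈ ℝ, and let {uₙ} be a sequence of smooth functions on [0,1] satisfying uₙ'(0) = 0, uₙ(1) = 0, which is bounded in the norm ‖u‖ = ( ∫₀¹ [u² + (u')² + (u'' + u'/r)²] r dr )^{1/2}, and which is a Palais–Smale sequence for I_λ at level L, meaning: I_λ(uₙ) → L, and sup { |I_λ'(uₙ)[φ]| : φ smooth with φ'(0)=0, φ(1)=0, ‖φ‖ ≤ 1 } → 0 as n → ∞, where I_λ'(u)[φ] = ∫₀¹ (u''+u'/r)(φ''+φ'/r) r dr + (1/2)∫₀¹ (u')²φ' dr − λ∫₀¹ fφ r dr. Then {uₙ} admits a subsequence that is Cauchy with respect to the norm u ↦ ( ∫₀¹ (u''(r) + u'(r)/r)² r dr )^{1/2}. -/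

import Mathlib

open MeasureTheory Set Filter

/-- The Navier energy functional `I_λ`. -/
noncomputable def Ifun (lam : ℝ) (f u : ℝ → ℝ) : ℝ :=
  (1 / 2) * (∫ r in (0:ℝ)..1, (deriv (deriv u) r + deriv u r / r) ^ 2 * r)
    + (1 / 6) * (∫ r in (0:ℝ)..1, (deriv u r) ^ 3)
    - lam * ∫ r in (0:ℝ)..1, f r * u r * r

/-- The first variation (derivative) of `I_λ` at `u` in the direction `φ`. -/
noncomputable def Ipair (lam : ℝ) (f u φ : ℝ → ℝ) : ℝ :=
  (∫ r in (0:ℝ)..1,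
      (deriv (deriv u) r + deriv u r / r) * (deriv (deriv φ) r + deriv φ r / r) * r)
    + (1 / 2) * (∫ r in (0:ℝ)..1, (deriv u r) ^ 2 * deriv φ r)
    - lam * ∫ r in (0:ℝ)..1, f r * φ r * r

/-- The squared radial `W^{2,2}([0,1], r dr)` norm used for the Navier problem. -/
noncomputable def NavierNormSq (u : ℝ → ℝ) : ℝ :=
  ∫ r in (0:ℝ)..1,
    ((u r) ^ 2 + (deriv u r) ^ 2 + (deriv (deriv u) r + deriv u r / r) ^ 2) * r


lemma aux_dv {v : ℝ → ℝ} (hv : ContDiff ℝ (⊤ : ℕ∞) v) : ContDiff ℝ (⊤ : ℕ∞) (deriv v) :=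
  (contDiff_infty_iff_deriv.mp hv).2

lemma aux_intOn_of_bdd {f : ℝ → ℝ} (hf : Measurable f) {C a b : ℝ}
    (h : ∀ r ∈ Ioc a b, |f r| ≤ C) : IntegrableOn f (Ioc a b) volume := by
  refine Integrable.mono' (integrable_const C) hf.aestronglyMeasurable ?_
  rw [ae_restrict_iff' measurableSet_Ioc]
  exact Filter.Eventually.of_forall fun r hr => by simpa [Real.norm_eq_abs] using h r hr

lemma aux_meas_lap (v : ℝ → ℝ) :
    Measurable (fun r => deriv (deriv v) r + deriv v r / r) :=
  (measurable_deriv _).add ((measurable_deriv _).div measurable_id)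

lemma aux_cs (μ : Measure ℝ) (f g : ℝ → ℝ)
    (hff : Integrable (fun x => f x * f x) μ) (hgg : Integrable (fun x => g x * g x) μ)
    (hfg : Integrable (fun x => f x * g x) μ) :
    (∫ x, f x * g x ∂μ)^2 ≤ (∫ x, f x * f x ∂μ) * (∫ x, g x * g x ∂μ) := by
  set A := ∫ x, f x * f x ∂μ
  set C := ∫ x, f x * g x ∂μ
  set D := ∫ x, g x * g x ∂μ
  have key : ∀ t : ℝ, 0 ≤ A * (t * t) + (2 * C) * t + D := by
    intro t
    have h1 : ∀ x, (t * f x + g x) * (t * f x + g x)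
        = (t * t) * (f x * f x) + (2 * t) * (f x * g x) + g x * g x := by intro x; ring
    have h2 : 0 ≤ ∫ x, (t * f x + g x) * (t * f x + g x) ∂μ :=
      integral_nonneg fun x => mul_self_nonneg _
    rw [integral_congr_ae (Filter.Eventually.of_forall h1)] at h2
    have i1 : Integrable (fun a => t * t * (f a * f a) + 2 * t * (f a * g a)) μ :=
      (hff.const_mul _).add (hfg.const_mul _)
    rw [integral_add i1 hgg, integral_add (hff.const_mul _) (hfg.const_mul _),
      MeasureTheory.integral_const_mul, MeasureTheory.integral_const_mul] at h2
    calc (0:ℝ) ≤ t * t * A + 2 * t * C + D := h2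
    _ = A * (t * t) + (2 * C) * t + D := by ring
  have hd := discrim_le_zero key
  rw [discrim] at hd
  nlinarith [hd]

/-- Cauchy–Schwarz estimate on a subinterval of `[0,1]`. -/
lemma aux_cs_interval {v : ℝ → ℝ} {CΔ B : ℝ}
    (hCΔ : ∀ r ∈ Ioc (0:ℝ) 1, |deriv (deriv v) r + deriv v r / r| ≤ CΔ)
    (hB : ∫ s in (0:ℝ)..1, s * (deriv (deriv v) s + deriv v s / s)^2 ≤ B)
    {r₁ r₂ : ℝ} (h01 : 0 ≤ r₁) (h12 : r₁ ≤ r₂) (h21 : r₂ ≤ 1) :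
    (∫ s in r₁..r₂, (s * deriv (deriv v) s + deriv v s))^2 ≤ ((r₂^2 - r₁^2)/2) * B := by
  set d := deriv v with hd
  set dd := deriv (deriv v) with hdd
  set Δ : ℝ → ℝ := fun r => dd r + d r / r with hΔ
  have hsub : Ioc r₁ r₂ ⊆ Ioc (0:ℝ) 1 := Ioc_subset_Ioc h01 h21
  have hmeasΔ : Measurable Δ := aux_meas_lap v
  have habs : ∀ r ∈ Ioc r₁ r₂, 0 < r ∧ r ≤ 1 ∧ |Δ r| ≤ CΔ ∧ Real.sqrt r ≤ 1 := by
    intro r hr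
    have h1 := hsub hr
    exact ⟨h1.1, h1.2, hCΔ r h1, Real.sqrt_le_one.mpr h1.2⟩
  have hCΔ0 : 0 ≤ CΔ := le_trans (abs_nonneg _) (hCΔ 1 (by norm_num))
  -- integrability of the three products
  have i1 : IntegrableOn (fun s => Real.sqrt s * Real.sqrt s) (Ioc r₁ r₂) volume := by
    refine aux_intOn_of_bdd (Real.continuous_sqrt.measurable.mul
      Real.continuous_sqrt.measurable) (C := 1) ?_
    intro r hr
    obtain ⟨hr0, hr1, -, hs1⟩ := habs r hr
    simp only [Pi.mul_apply]; rw [abs_mul]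
    exact mul_le_one₀ (by rwa [abs_of_nonneg (Real.sqrt_nonneg r)]) (abs_nonneg _)
      (by rwa [abs_of_nonneg (Real.sqrt_nonneg r)])
  have i2 : IntegrableOn (fun s => (Real.sqrt s * Δ s) * (Real.sqrt s * Δ s))
      (Ioc r₁ r₂) volume := by
    refine aux_intOn_of_bdd ((Real.continuous_sqrt.measurable.mul hmeasΔ).mul
      (Real.continuous_sqrt.measurable.mul hmeasΔ)) (C := CΔ * CΔ) ?_
    intro r hr
    obtain ⟨hr0, hr1, hΔb, hs1⟩ := habs r hr
    simp only [Pi.mul_apply]; rw [abs_mul, abs_mul]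
    have h1 : |Real.sqrt r| * |Δ r| ≤ 1 * CΔ := by
      apply mul_le_mul _ hΔb (abs_nonneg _) zero_le_one
      rwa [abs_of_nonneg (Real.sqrt_nonneg r)]
    rw [one_mul] at h1
    exact mul_le_mul h1 h1 (by positivity) hCΔ0
  have i3 : IntegrableOn (fun s => Real.sqrt s * (Real.sqrt s * Δ s)) (Ioc r₁ r₂) volume := by
    refine aux_intOn_of_bdd (Real.continuous_sqrt.measurable.mul
      (Real.continuous_sqrt.measurable.mul hmeasΔ)) (C := CΔ) ?_
    intro r hr
    obtain ⟨hr0, hr1, hΔb, hs1⟩ := habs r hr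
    simp only [Pi.mul_apply]; rw [abs_mul, abs_mul]
    calc |Real.sqrt r| * (|Real.sqrt r| * |Δ r|) ≤ 1 * (1 * CΔ) := by
          apply mul_le_mul _ _ (by positivity) zero_le_one
          · rwa [abs_of_nonneg (Real.sqrt_nonneg r)]
          · apply mul_le_mul _ hΔb (abs_nonneg _) zero_le_one
            rwa [abs_of_nonneg (Real.sqrt_nonneg r)]
      _ = CΔ := by ring
  -- rewrite the integral
  have e0 : (∫ s in r₁..r₂, (s * dd s + d s))
      = ∫ s in Ioc r₁ r₂, Real.sqrt s * (Real.sqrt s * Δ s) := by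
    rw [intervalIntegral.integral_of_le h12]
    refine setIntegral_congr_fun measurableSet_Ioc ?_
    intro s hs
    obtain ⟨hs0, -, -, -⟩ := habs s hs
    show s * dd s + d s = Real.sqrt s * (Real.sqrt s * Δ s)
    have h2 : Real.sqrt s * (Real.sqrt s * Δ s) = s * Δ s := by
      rw [← mul_assoc, Real.mul_self_sqrt hs0.le]
    rw [h2, hΔ]
    field_simp
  have key := aux_cs (volume.restrict (Ioc r₁ r₂)) Real.sqrt (fun s => Real.sqrt s * Δ s) i1 i2 i3
  have eA : (∫ s in Ioc r₁ r₂, Real.sqrt s * Real.sqrt s) = (r₂^2 - r₁^2)/2 := by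
    have e1 : (∫ s in Ioc r₁ r₂, Real.sqrt s * Real.sqrt s) = ∫ s in Ioc r₁ r₂, s := by
      refine setIntegral_congr_fun measurableSet_Ioc fun s hs => ?_
      exact Real.mul_self_sqrt (habs s hs).1.le
    rw [e1, ← intervalIntegral.integral_of_le h12]
    simpa using intervalIntegral.integral_id (a := r₁) (b := r₂)
  have eB : (∫ s in Ioc r₁ r₂, (Real.sqrt s * Δ s) * (Real.sqrt s * Δ s)) ≤ B := by
    have e1 : (∫ s in Ioc r₁ r₂, (Real.sqrt s * Δ s) * (Real.sqrt s * Δ s))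
        = ∫ s in Ioc r₁ r₂, s * (Δ s)^2 := by
      refine setIntegral_congr_fun measurableSet_Ioc fun s hs => ?_
      have h0 := (habs s hs).1
      have : (Real.sqrt s * Δ s) * (Real.sqrt s * Δ s)
          = (Real.sqrt s * Real.sqrt s) * (Δ s)^2 := by ring
      rw [this, Real.mul_self_sqrt h0.le]
    rw [e1]
    have iB : IntegrableOn (fun s => s * (Δ s)^2) (Ioc 0 1) volume := by
      refine aux_intOn_of_bdd (measurable_id.mul (hmeasΔ.pow_const 2)) (C := CΔ * CΔ) ?_
      intro r hr
      have hb := hCΔ r hr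
      have h2 : (Δ r)^2 ≤ CΔ * CΔ := by nlinarith [sq_abs (Δ r), abs_nonneg (Δ r)]
      simp only [Pi.mul_apply, id]
      rw [abs_of_nonneg (mul_nonneg hr.1.le (sq_nonneg (Δ r)))]
      nlinarith [hr.1.le, hr.2, sq_nonneg (Δ r)]
    have hnn : (0:ℝ → ℝ) ≤ᵐ[volume.restrict (Ioc (0:ℝ) 1)] fun s => s * (Δ s)^2 := by
      filter_upwards [ae_restrict_mem measurableSet_Ioc] with r hr
      simp only [Pi.zero_apply]
      exact mul_nonneg hr.1.le (sq_nonneg _)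
    have mono := setIntegral_mono_set iB hnn (HasSubset.Subset.eventuallyLE hsub)
    calc (∫ s in Ioc r₁ r₂, s * (Δ s)^2) ≤ ∫ s in Ioc 0 1, s * (Δ s)^2 := mono
      _ = ∫ s in (0:ℝ)..1, s * (dd s + d s / s)^2 := by
          rw [intervalIntegral.integral_of_le (by norm_num : (0:ℝ) ≤ 1)]
      _ ≤ B := hB
  have hA0 : (0:ℝ) ≤ (r₂^2 - r₁^2)/2 := by nlinarith
  have hgg0 : (0:ℝ) ≤ ∫ s in Ioc r₁ r₂, (Real.sqrt s * Δ s) * (Real.sqrt s * Δ s) :=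
    integral_nonneg fun s => mul_self_nonneg _
  calc (∫ s in r₁..r₂, (s * dd s + d s))^2
      = (∫ s in Ioc r₁ r₂, Real.sqrt s * (Real.sqrt s * Δ s))^2 := by rw [e0]
    _ ≤ (∫ s in Ioc r₁ r₂, Real.sqrt s * Real.sqrt s)
        * (∫ s in Ioc r₁ r₂, (Real.sqrt s * Δ s) * (Real.sqrt s * Δ s)) := key
    _ = ((r₂^2 - r₁^2)/2) * (∫ s in Ioc r₁ r₂, (Real.sqrt s * Δ s) * (Real.sqrt s * Δ s)) := by
        rw [eA]
    _ ≤ ((r₂^2 - r₁^2)/2) * B := mul_le_mul_of_nonneg_left eB hA0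

section helpers
variable {v : ℝ → ℝ}


lemma aux_contv (hv : ContDiff ℝ (⊤ : ℕ∞) v) : Continuous v := hv.continuous

/-- FTC representation: `∫ (s v'' + v') = r₂ v'(r₂) − r₁ v'(r₁)`. -/
lemma aux_rep (hv : ContDiff ℝ (⊤ : ℕ∞) v) (r₁ r₂ : ℝ) :
    ∫ s in r₁..r₂, (s * deriv (deriv v) s + deriv v s)
      = r₂ * deriv v r₂ - r₁ * deriv v r₁ := by
  have hdd : ∀ x ∈ uIcc r₁ r₂, HasDerivAt (fun s => s * deriv v s)
      (x * deriv (deriv v) x + deriv v x) x := by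
    intro x _
    have h1 : HasDerivAt (fun s : ℝ => s) 1 x := hasDerivAt_id x
    have h2 : HasDerivAt (deriv v) (deriv (deriv v) x) x :=
      ((aux_dv hv).differentiable (by norm_num) x).hasDerivAt
    exact (h1.mul h2).congr_deriv (by ring)
  have hint : IntervalIntegrable (fun s => s * deriv (deriv v) s + deriv v s) volume r₁ r₂ :=
    (Continuous.intervalIntegrable (by
      exact (continuous_id.mul ((aux_dv (aux_dv hv)).continuous)).add ((aux_dv hv).continuous)) _ _)
  simpa using intervalIntegral.integral_eq_sub_of_hasDerivAt hdd hint

/-- Bounds on a compact interval for a smooth function with `v'(0)=0`. -/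
lemma aux_bound (hv : ContDiff ℝ (⊤ : ℕ∞) v) (h0 : deriv v 0 = 0) :
    ∃ C : ℝ, 0 ≤ C ∧
      (∀ r ∈ Icc (0:ℝ) 1, |v r| ≤ C ∧ |deriv v r| ≤ C ∧ |deriv (deriv v) r| ≤ C) ∧
      (∀ r ∈ Ioc (0:ℝ) 1, |deriv v r / r| ≤ C) := by
  obtain ⟨C0, hC0⟩ := (isCompact_Icc : IsCompact (Icc (0:ℝ) 1)).exists_bound_of_continuousOn
    ((aux_contv hv).continuousOn (s := Icc 0 1))
  obtain ⟨C1, hC1⟩ := (isCompact_Icc : IsCompact (Icc (0:ℝ) 1)).exists_bound_of_continuousOn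
    (((aux_dv hv).continuous).continuousOn (s := Icc 0 1))
  obtain ⟨C2, hC2⟩ := (isCompact_Icc : IsCompact (Icc (0:ℝ) 1)).exists_bound_of_continuousOn
    (((aux_dv (aux_dv hv)).continuous).continuousOn (s := Icc 0 1))
  refine ⟨max 0 (max C0 (max C1 C2)), le_max_left _ _, ?_, ?_⟩
  · intro r hr
    have b0 : C0 ≤ max 0 (max C0 (max C1 C2)) := by
      apply le_max_of_le_right; exact le_max_left _ _
    have b1 : C1 ≤ max 0 (max C0 (max C1 C2)) := by
      apply le_max_of_le_right; apply le_max_of_le_right; exact le_max_left _ _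
    have b2 : C2 ≤ max 0 (max C0 (max C1 C2)) := by
      apply le_max_of_le_right; apply le_max_of_le_right; exact le_max_right _ _
    exact ⟨le_trans (by simpa using hC0 r hr) b0, le_trans (by simpa using hC1 r hr) b1,
      le_trans (by simpa using hC2 r hr) b2⟩
  · intro r hr
    have hmvt : |deriv v r - deriv v 0| ≤ C2 * |r - 0| := by
      have := Convex.norm_image_sub_le_of_norm_hasDerivWithin_le
        (f := deriv v) (f' := deriv (deriv v)) (s := Icc (0:ℝ) 1)
        (fun x hx => (((aux_dv hv).differentiable (by norm_num) x).hasDerivAt.hasDerivWithinAt))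
        (fun x hx => by simpa using hC2 x hx) (convex_Icc 0 1)
        (left_mem_Icc.mpr zero_le_one) (Ioc_subset_Icc_self hr)
      simpa [Real.norm_eq_abs] using this
    rw [h0, sub_zero] at hmvt
    rw [abs_div]
    rw [div_le_iff₀ (by simpa [abs_of_pos hr.1] using hr.1 : (0:ℝ) < |r|)]
    have hC2r : C2 * |r - 0| = C2 * |r| := by simp
    calc |deriv v r| ≤ C2 * |r| := by rw [← hC2r]; exact hmvt
    _ ≤ max 0 (max C0 (max C1 C2)) * |r| := by
        apply mul_le_mul_of_nonneg_right _ (abs_nonneg r)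
        apply le_max_of_le_right; apply le_max_of_le_right; exact le_max_right _ _

lemma aux_ddiff (hv : ContDiff ℝ (⊤ : ℕ∞) v) : Differentiable ℝ (deriv v) :=
  (aux_dv hv).differentiable (by norm_num)

end helpers

section perfun
variable {v : ℝ → ℝ}

/-- weighted L² of the Laplacian is at most the Navier norm. -/
lemma aux_lap_le_navier (hv : ContDiff ℝ (⊤ : ℕ∞) v) (h0 : deriv v 0 = 0) :
    ∫ s in (0:ℝ)..1, s * (deriv (deriv v) s + deriv v s / s)^2
      ≤ ∫ r in (0:ℝ)..1,
          ((v r) ^ 2 + (deriv v r) ^ 2 + (deriv (deriv v) r + deriv v r / r) ^ 2) * r := by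
  obtain ⟨C, hC0, hCc, hCq⟩ := aux_bound hv h0
  set Δ : ℝ → ℝ := fun r => deriv (deriv v) r + deriv v r / r with hΔ
  have hmeasΔ : Measurable Δ := aux_meas_lap v
  have hΔbd : ∀ r ∈ Ioc (0:ℝ) 1, |Δ r| ≤ 2 * C := by
    intro r hr
    have h1 := (hCc r (Ioc_subset_Icc_self hr)).2.2
    have h2 := hCq r hr
    calc |Δ r| ≤ |deriv (deriv v) r| + |deriv v r / r| := abs_add_le _ _
      _ ≤ C + C := add_le_add h1 h2
      _ = 2 * C := by ring
  have int1 : IntervalIntegrable (fun s => s * (Δ s)^2) volume 0 1 := by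
    rw [intervalIntegrable_iff, uIoc_of_le (by norm_num : (0:ℝ) ≤ 1)]
    refine aux_intOn_of_bdd (measurable_id.mul (hmeasΔ.pow_const 2)) (C := (2*C)*(2*C)) ?_
    intro r hr
    have h2 : (Δ r)^2 ≤ (2*C) * (2*C) := by
      nlinarith [sq_abs (Δ r), abs_nonneg (Δ r), hΔbd r hr]
    simp only [Pi.mul_apply, id]
    rw [abs_of_nonneg (mul_nonneg hr.1.le (sq_nonneg (Δ r)))]
    nlinarith [hr.1.le, hr.2, sq_nonneg (Δ r)]
  have int2 : IntervalIntegrable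
      (fun r => ((v r) ^ 2 + (deriv v r) ^ 2 + (Δ r) ^ 2) * r) volume 0 1 := by
    rw [intervalIntegrable_iff, uIoc_of_le (by norm_num : (0:ℝ) ≤ 1)]
    refine aux_intOn_of_bdd ((((hv.continuous.measurable.pow_const 2).add
      ((measurable_deriv v).pow_const 2)).add (hmeasΔ.pow_const 2)).mul measurable_id)
      (C := (C^2 + C^2 + (2*C)*(2*C))) ?_
    intro r hr
    obtain ⟨hb1, hb2, hb3⟩ := hCc r (Ioc_subset_Icc_self hr)
    have h2 : (Δ r)^2 ≤ (2*C) * (2*C) := by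
      nlinarith [sq_abs (Δ r), abs_nonneg (Δ r), hΔbd r hr]
    have hnn : 0 ≤ ((v r) ^ 2 + (deriv v r) ^ 2 + (Δ r) ^ 2) * r := by
      apply mul_nonneg _ hr.1.le
      positivity
    simp only [Pi.mul_apply, Pi.add_apply, id]
    rw [abs_of_nonneg hnn]
    nlinarith [sq_abs (v r), sq_abs (deriv v r), hr.1.le, hr.2, sq_nonneg (v r),
      sq_nonneg (deriv v r), sq_nonneg (Δ r), abs_nonneg (v r), abs_nonneg (deriv v r)]
  refine intervalIntegral.integral_mono_on (by norm_num) int1 int2 ?_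
  intro s hs
  nlinarith [sq_nonneg (v s), sq_nonneg (deriv v s), sq_nonneg (Δ s), hs.1, hs.2]

/-- Uniform bound for the first derivative from the Navier bound. -/
lemma aux_deriv_bdd (hv : ContDiff ℝ (⊤ : ℕ∞) v) (h0 : deriv v 0 = 0) {B : ℝ}
    (hB : ∫ s in (0:ℝ)..1, s * (deriv (deriv v) s + deriv v s / s)^2 ≤ B) :
    ∀ r ∈ Icc (0:ℝ) 1, |deriv v r| ≤ Real.sqrt B := by
  obtain ⟨C, hC0, hCc, hCq⟩ := aux_bound hv h0
  have hΔbd : ∀ r ∈ Ioc (0:ℝ) 1, |deriv (deriv v) r + deriv v r / r| ≤ 2 * C := by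
    intro r hr
    calc |deriv (deriv v) r + deriv v r / r|
        ≤ |deriv (deriv v) r| + |deriv v r / r| := abs_add_le _ _
      _ ≤ C + C := add_le_add (hCc r (Ioc_subset_Icc_self hr)).2.2 (hCq r hr)
      _ = 2 * C := by ring
  intro r hr
  rcases eq_or_lt_of_le hr.1 with h | h
  · rw [← h, h0]
    simp [Real.sqrt_nonneg]
  · have hcs := aux_cs_interval hΔbd hB (le_refl 0) hr.1 hr.2
    rw [aux_rep hv 0 r, h0] at hcs
    have h1 : (r * deriv v r)^2 ≤ (r^2/2) * B := by
      have : ((r^2 - 0^2)/2) * B = (r^2/2) * B := by ring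
      simpa [this] using hcs
    have h2 : (deriv v r)^2 ≤ B := by
      have hr2 : 0 < r^2 := by positivity
      nlinarith [sq_nonneg (deriv v r)]
    calc |deriv v r| = Real.sqrt ((deriv v r)^2) := (Real.sqrt_sq_eq_abs _).symm
      _ ≤ Real.sqrt B := Real.sqrt_le_sqrt h2

/-- Hölder-1/2 continuity of `r ↦ r v'(r)`. -/
lemma aux_holder (hv : ContDiff ℝ (⊤ : ℕ∞) v) (h0 : deriv v 0 = 0) {B : ℝ}
    (hB : ∫ s in (0:ℝ)..1, s * (deriv (deriv v) s + deriv v s / s)^2 ≤ B)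
    (hB0 : 0 ≤ B) :
    ∀ r₁ ∈ Icc (0:ℝ) 1, ∀ r₂ ∈ Icc (0:ℝ) 1,
      |r₂ * deriv v r₂ - r₁ * deriv v r₁| ≤ Real.sqrt B * Real.sqrt |r₂ - r₁| := by
  obtain ⟨C, hC0, hCc, hCq⟩ := aux_bound hv h0
  have hΔbd : ∀ r ∈ Ioc (0:ℝ) 1, |deriv (deriv v) r + deriv v r / r| ≤ 2 * C := by
    intro r hr
    calc |deriv (deriv v) r + deriv v r / r|
        ≤ |deriv (deriv v) r| + |deriv v r / r| := abs_add_le _ _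
      _ ≤ C + C := add_le_add (hCc r (Ioc_subset_Icc_self hr)).2.2 (hCq r hr)
      _ = 2 * C := by ring
  have key : ∀ r₁ ∈ Icc (0:ℝ) 1, ∀ r₂ ∈ Icc (0:ℝ) 1, r₁ ≤ r₂ →
      |r₂ * deriv v r₂ - r₁ * deriv v r₁| ≤ Real.sqrt B * Real.sqrt |r₂ - r₁| := by
    intro r₁ h1 r₂ h2 h12
    have hcs := aux_cs_interval hΔbd hB h1.1 h12 h2.2
    rw [aux_rep hv r₁ r₂] at hcs
    have hle : ((r₂^2 - r₁^2)/2) * B ≤ (r₂ - r₁) * B := by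
      apply mul_le_mul_of_nonneg_right _ hB0
      nlinarith [h1.1, h2.2]
    have h3 : (r₂ * deriv v r₂ - r₁ * deriv v r₁)^2 ≤ (r₂ - r₁) * B := le_trans hcs hle
    calc |r₂ * deriv v r₂ - r₁ * deriv v r₁|
        = Real.sqrt ((r₂ * deriv v r₂ - r₁ * deriv v r₁)^2) := (Real.sqrt_sq_eq_abs _).symm
      _ ≤ Real.sqrt ((r₂ - r₁) * B) := Real.sqrt_le_sqrt h3
      _ = Real.sqrt B * Real.sqrt |r₂ - r₁| := by
          rw [abs_of_nonneg (by linarith : (0:ℝ) ≤ r₂ - r₁),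
            Real.sqrt_mul (by linarith : (0:ℝ) ≤ r₂ - r₁), mul_comm]
  intro r₁ h1 r₂ h2
  rcases le_total r₁ r₂ with h | h
  · exact key r₁ h1 r₂ h2 h
  · rw [abs_sub_comm, abs_sub_comm r₂ r₁]
    exact key r₂ h2 r₁ h1 h

end perfun

theorem aux_extract (u : ℕ → ℝ → ℝ) (hsm : ∀ n, ContDiff ℝ (⊤ : ℕ∞) (u n))
    (hbc : ∀ n, deriv (u n) 0 = 0 ∧ u n 1 = 0)
    (B : ℝ) (hB0 : 0 ≤ B) (hB : ∀ n, NavierNormSq (u n) ≤ B) :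
    ∃ ns : ℕ → ℕ, StrictMono ns ∧ ∃ g : ℝ → ℝ, Measurable g ∧
      (∀ r, |g r| ≤ Real.sqrt B) ∧
      Tendsto (fun i => ∫ r in Ioc (0:ℝ) 1, |deriv (u (ns i)) r - g r|) atTop (nhds 0) := by
  classical
  have hlap : ∀ n, ∫ s in (0:ℝ)..1,
      s * (deriv (deriv (u n)) s + deriv (u n) s / s)^2 ≤ B := by
    intro n
    exact le_trans (aux_lap_le_navier (hsm n) (hbc n).1) (hB n)
  set M := Real.sqrt B with hMdef
  have hM0 : 0 ≤ M := Real.sqrt_nonneg _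
  have hM : ∀ n, ∀ r ∈ Icc (0:ℝ) 1, |deriv (u n) r| ≤ M := fun n =>
    aux_deriv_bdd (hsm n) (hbc n).1 (hlap n)
  have hH : ∀ n, ∀ r₁ ∈ Icc (0:ℝ) 1, ∀ r₂ ∈ Icc (0:ℝ) 1,
      |r₂ * deriv (u n) r₂ - r₁ * deriv (u n) r₁| ≤ M * Real.sqrt |r₂ - r₁| := fun n =>
    aux_holder (hsm n) (hbc n).1 (hlap n) hB0
  -- bound for h n r := r * deriv (u n) r
  have hhb : ∀ n, ∀ r ∈ Icc (0:ℝ) 1, |r * deriv (u n) r| ≤ M := by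
    intro n r hr
    have := hH n 0 (by norm_num) r hr
    simp only [zero_mul, sub_zero] at this
    calc |r * deriv (u n) r| ≤ M * Real.sqrt |r| := this
      _ ≤ M * 1 := by
          apply mul_le_mul_of_nonneg_left _ hM0
          rw [Real.sqrt_le_one, abs_of_nonneg hr.1]
          exact hr.2
      _ = M := mul_one M
  -- dense sequence in [0,1]
  haveI : Nonempty (Icc (0:ℝ) 1) := ⟨⟨0, by norm_num, by norm_num⟩⟩
  set q : ℕ → ℝ := fun k => ((TopologicalSpace.denseSeq (Icc (0:ℝ) 1) k : Icc (0:ℝ) 1) : ℝ)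
    with hqdef
  have hqmem : ∀ k, q k ∈ Icc (0:ℝ) 1 := fun k => (TopologicalSpace.denseSeq (Icc (0:ℝ) 1) k).2
  have hqdense : ∀ r ∈ Icc (0:ℝ) 1, ∀ ε > (0:ℝ), ∃ k, |q k - r| < ε := by
    intro r hr ε hε
    obtain ⟨k, hk⟩ := (TopologicalSpace.denseRange_denseSeq (Icc (0:ℝ) 1)).exists_dist_lt
      ⟨r, hr⟩ hε
    refine ⟨k, ?_⟩
    rw [Subtype.dist_eq, Real.dist_eq] at hk
    rw [abs_sub_comm] at hk
    exact hk
  -- compactness extraction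
  set V : ℕ → (ℕ → ℝ) := fun n k => q k * deriv (u n) (q k) with hVdef
  have hVmem : ∀ n, V n ∈ Set.pi univ (fun _ : ℕ => Icc (-M) M) := by
    intro n
    intro k _
    exact abs_le.mp (hhb n (q k) (hqmem k))
  obtain ⟨A, -, ns, hns, hconv⟩ :=
    (isCompact_univ_pi fun _ : ℕ => isCompact_Icc).tendsto_subseq hVmem
  have hptq : ∀ k, Tendsto (fun i => q k * deriv (u (ns i)) (q k)) atTop (nhds (A k)) := by
    intro k
    exact (tendsto_pi_nhds.mp hconv) k
  -- pointwise Cauchy of r * deriv at every point of [0,1]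
  have hcauchy : ∀ r ∈ Icc (0:ℝ) 1, CauchySeq (fun i => r * deriv (u (ns i)) r) := by
    intro r hr
    rw [Metric.cauchySeq_iff]
    intro ε hε
    have hε3 : 0 < ε / 3 := by linarith
    set δ : ℝ := (ε / (3 * (M + 1)))^2 with hδdef
    have hδpos : 0 < δ := by positivity
    obtain ⟨k, hk⟩ := hqdense r hr δ hδpos
    have hqCauchy : CauchySeq (fun i => q k * deriv (u (ns i)) (q k)) := (hptq k).cauchySeq
    rw [Metric.cauchySeq_iff] at hqCauchy
    obtain ⟨N, hN⟩ := hqCauchy (ε/3) hε3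
    refine ⟨N, fun i hi j hj => ?_⟩
    have hnear : ∀ n, |r * deriv (u n) r - q k * deriv (u n) (q k)| ≤ ε/3 := by
      intro n
      have h1 := hH n (q k) (hqmem k) r hr
      have h2 : Real.sqrt |r - q k| ≤ ε / (3 * (M + 1)) := by
        rw [show |r - q k| = |q k - r| from abs_sub_comm _ _]
        calc Real.sqrt |q k - r| ≤ Real.sqrt δ := Real.sqrt_le_sqrt hk.le
          _ = ε / (3 * (M + 1)) := Real.sqrt_sq (by positivity)
      calc |r * deriv (u n) r - q k * deriv (u n) (q k)| ≤ M * Real.sqrt |r - q k| := h1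
        _ ≤ M * (ε / (3 * (M + 1))) := mul_le_mul_of_nonneg_left h2 hM0
        _ ≤ ε/3 := by
            have hM1 : M + 1 ≠ 0 := by positivity
            have hfrac : M / (M+1) ≤ 1 := by
              rw [div_le_one (by linarith)]; linarith
            rw [mul_div_assoc']
            rw [div_le_div_iff₀ (by positivity) (by norm_num : (0:ℝ) < 3)]
            nlinarith [hε.le, hM0]
    have hd := hN i hi j hj
    rw [Real.dist_eq] at hd ⊢
    have e1 := hnear (ns i)
    have e2 := hnear (ns j)
    have : r * deriv (u (ns i)) r - r * deriv (u (ns j)) r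
        = (r * deriv (u (ns i)) r - q k * deriv (u (ns i)) (q k))
          + (q k * deriv (u (ns i)) (q k) - q k * deriv (u (ns j)) (q k))
          + (q k * deriv (u (ns j)) (q k) - r * deriv (u (ns j)) r) := by ring
    rw [this]
    calc |_ + _ + _| ≤ |_ + _| + |q k * deriv (u (ns j)) (q k) - r * deriv (u (ns j)) r| :=
          abs_add_le _ _
      _ ≤ |r * deriv (u (ns i)) r - q k * deriv (u (ns i)) (q k)|
            + |q k * deriv (u (ns i)) (q k) - q k * deriv (u (ns j)) (q k)|
            + |q k * deriv (u (ns j)) (q k) - r * deriv (u (ns j)) r| := by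
          exact add_le_add (abs_add_le _ _) le_rfl
      _ < ε/3 + ε/3 + ε/3 := by
          apply add_lt_add_of_lt_of_le (add_lt_add_of_le_of_lt e1 hd)
          rw [abs_sub_comm]
          exact e2
      _ = ε := by ring
  -- pointwise limit function via projection
  set proj : ℝ → ℝ := fun r => min (max r 0) 1 with hprojdef
  have hprojmem : ∀ r, proj r ∈ Icc (0:ℝ) 1 :=
    fun r => ⟨le_min (le_max_right r 0) zero_le_one, min_le_right _ _⟩
  have hprojid : ∀ r ∈ Ioc (0:ℝ) 1, proj r = r := by
    intro r hr
    simp only [hprojdef]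
    rw [max_eq_left hr.1.le, min_eq_left hr.2]
  have hpt : ∀ r : ℝ, ∃ l, Tendsto (fun i => deriv (u (ns i)) (proj r)) atTop (nhds l) := by
    intro r
    rcases eq_or_lt_of_le (hprojmem r).1 with h | h
    · refine ⟨0, ?_⟩
      have : ∀ i, deriv (u (ns i)) (proj r) = 0 := by
        intro i; rw [← h]; exact (hbc (ns i)).1
      simp only [this]
      exact tendsto_const_nhds
    · obtain ⟨l, hl⟩ := cauchySeq_tendsto_of_complete (hcauchy (proj r) (hprojmem r))
      refine ⟨l / proj r, ?_⟩
      have := hl.div_const (proj r)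
      have e : ∀ i, proj r * deriv (u (ns i)) (proj r) / proj r = deriv (u (ns i)) (proj r) := by
        intro i
        rw [mul_comm, mul_div_assoc, div_self (ne_of_gt h), mul_one]
      simpa only [e] using this
  choose g hg using hpt
  have hFmeas : ∀ i, Measurable (fun r => deriv (u (ns i)) (proj r)) :=
    fun i => (measurable_deriv _).comp ((measurable_id.max measurable_const).min measurable_const)
  have hgmeas : Measurable g :=
    measurable_of_tendsto_metrizable' atTop hFmeas (tendsto_pi_nhds.mpr hg)
  have hgbd : ∀ r, |g r| ≤ M := by
    intro r
    have h1 : Tendsto (fun i => |deriv (u (ns i)) (proj r)|) atTop (nhds |g r|) := (hg r).abs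
    exact le_of_tendsto h1 (Filter.Eventually.of_forall fun i => hM (ns i) _ (hprojmem r))
  -- dominated convergence
  have hDCT : Tendsto (fun i => ∫ r in Ioc (0:ℝ) 1, |deriv (u (ns i)) r - g r|)
      atTop (nhds 0) := by
    have key := tendsto_integral_of_dominated_convergence
      (μ := volume.restrict (Ioc (0:ℝ) 1))
      (F := fun i r => |deriv (u (ns i)) r - g r|) (f := fun _ => (0:ℝ))
      (bound := fun _ => 2 * M)
      (fun i => (((measurable_deriv _).sub hgmeas).abs).aestronglyMeasurable)
      (integrable_const _)
      (by
        intro i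
        filter_upwards [ae_restrict_mem measurableSet_Ioc] with r hr
        rw [Real.norm_eq_abs, abs_abs]
        calc |deriv (u (ns i)) r - g r| ≤ |deriv (u (ns i)) r| + |g r| := abs_sub _ _
          _ ≤ M + M := add_le_add (hM (ns i) r (Ioc_subset_Icc_self hr)) (hgbd r)
          _ = 2 * M := by ring)
      (by
        filter_upwards [ae_restrict_mem measurableSet_Ioc] with r hr
        have h1 : Tendsto (fun i => deriv (u (ns i)) r) atTop (nhds (g r)) := by
          have := hg r
          rwa [hprojid r hr] at this
        have := (h1.sub (tendsto_const_nhds (x := g r))).abs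
        simpa using this)
    simpa using key
  exact ⟨ns, hns, g, hgmeas, hgbd, hDCT⟩

lemma aux_sq_le {x C : ℝ} (h : |x| ≤ C) : x^2 ≤ C^2 := by
  nlinarith [sq_abs x, abs_nonneg x]

lemma aux_II {F : ℝ → ℝ} (hm : Measurable F) {C : ℝ}
    (h : ∀ r ∈ Ioc (0:ℝ) 1, |F r| ≤ C) : IntervalIntegrable F volume 0 1 := by
  rw [intervalIntegrable_iff, uIoc_of_le (by norm_num : (0:ℝ) ≤ 1)]
  exact aux_intOn_of_bdd hm h

/-- All the properties of the normalized test function `φ = (P - Q)/c`. -/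
lemma aux_phi (lam : ℝ) (f P Q : ℝ → ℝ)
    (hP : ContDiff ℝ (⊤ : ℕ∞) P) (hQ : ContDiff ℝ (⊤ : ℕ∞) Q)
    (hP0 : deriv P 0 = 0) (hQ0 : deriv Q 0 = 0) (hP1 : P 1 = 0) (hQ1 : Q 1 = 0)
    {c : ℝ} (hc : 0 < c) :
    ContDiff ℝ (⊤ : ℕ∞) (fun r => (P r - Q r)/c) ∧
    deriv (fun r => (P r - Q r)/c) 0 = 0 ∧ (fun r => (P r - Q r)/c) 1 = 0 ∧
    NavierNormSq (fun r => (P r - Q r)/c)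
      = (∫ r in (0:ℝ)..1, ((P r - Q r)^2 + (deriv P r - deriv Q r)^2
          + ((deriv (deriv P) r + deriv P r / r)
            - (deriv (deriv Q) r + deriv Q r / r))^2) * r) / c^2 ∧
    Ipair lam f P (fun r => (P r - Q r)/c) - Ipair lam f Q (fun r => (P r - Q r)/c)
      = ((∫ r in (0:ℝ)..1, ((deriv (deriv P) r + deriv P r / r)
            - (deriv (deriv Q) r + deriv Q r / r))^2 * r)
        + (1/2) * (∫ r in (0:ℝ)..1, ((deriv P r)^2 - (deriv Q r)^2)
            * (deriv P r - deriv Q r))) / c := by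
  have hdP : Differentiable ℝ P := hP.differentiable (by norm_num)
  have hdQ : Differentiable ℝ Q := hQ.differentiable (by norm_num)
  have hddP : Differentiable ℝ (deriv P) := aux_ddiff hP
  have hddQ : Differentiable ℝ (deriv Q) := aux_ddiff hQ
  set φ : ℝ → ℝ := fun r => (P r - Q r)/c with hφdef
  have hφc : ContDiff ℝ (⊤ : ℕ∞) φ := (hP.sub hQ).div_const c
  have hdφ : deriv φ = fun r => (deriv P r - deriv Q r)/c := by
    funext r
    rw [hφdef]
    rw [deriv_div_const, deriv_fun_sub (hdP r) (hdQ r)]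
  have hddφ : deriv (deriv φ) = fun r => (deriv (deriv P) r - deriv (deriv Q) r)/c := by
    rw [hdφ]
    funext r
    rw [deriv_div_const, deriv_fun_sub (hddP r) (hddQ r)]
  have hlapφ : ∀ r, deriv (deriv φ) r + deriv φ r / r
      = ((deriv (deriv P) r + deriv P r / r) - (deriv (deriv Q) r + deriv Q r / r))/c := by
    intro r
    rw [hddφ, hdφ]
    simp only
    ring
  have hφ0 : deriv φ 0 = 0 := by rw [hdφ]; simp [hP0, hQ0]
  have hφ1 : φ 1 = 0 := by rw [hφdef]; simp [hP1, hQ1]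
  -- integrability of products with the Laplacians
  obtain ⟨CP, hCP0, hCPc, hCPq⟩ := aux_bound hP hP0
  obtain ⟨CQ, hCQ0, hCQc, hCQq⟩ := aux_bound hQ hQ0
  set ΔP : ℝ → ℝ := fun r => deriv (deriv P) r + deriv P r / r with hΔP
  set ΔQ : ℝ → ℝ := fun r => deriv (deriv Q) r + deriv Q r / r with hΔQ
  have hbP : ∀ r ∈ Ioc (0:ℝ) 1, |ΔP r| ≤ 2*CP := by
    intro r hr
    calc |ΔP r| ≤ |deriv (deriv P) r| + |deriv P r / r| := abs_add_le _ _
      _ ≤ CP + CP := add_le_add (hCPc r (Ioc_subset_Icc_self hr)).2.2 (hCPq r hr)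
      _ = 2*CP := by ring
  have hbQ : ∀ r ∈ Ioc (0:ℝ) 1, |ΔQ r| ≤ 2*CQ := by
    intro r hr
    calc |ΔQ r| ≤ |deriv (deriv Q) r| + |deriv Q r / r| := abs_add_le _ _
      _ ≤ CQ + CQ := add_le_add (hCQc r (Ioc_subset_Icc_self hr)).2.2 (hCQq r hr)
      _ = 2*CQ := by ring
  have hmP : Measurable ΔP := aux_meas_lap P
  have hmQ : Measurable ΔQ := aux_meas_lap Q
  have iPa : IntervalIntegrable (fun r => ΔP r * (ΔP r - ΔQ r) * r) volume 0 1 := by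
    refine aux_II ((hmP.mul (hmP.sub hmQ)).mul measurable_id)
      (C := (2*CP) * (2*CP + 2*CQ)) ?_
    intro r hr
    rw [abs_mul, abs_mul]
    have h1 := hbP r hr
    have h2 : |ΔP r - ΔQ r| ≤ 2*CP + 2*CQ := by
      calc |ΔP r - ΔQ r| ≤ |ΔP r| + |ΔQ r| := abs_sub _ _
        _ ≤ 2*CP + 2*CQ := add_le_add h1 (hbQ r hr)
    have h3 : |(id : ℝ → ℝ) r| ≤ 1 := by
      simp only [id]
      rw [abs_of_nonneg hr.1.le]; exact hr.2
    calc |ΔP r| * |ΔP r - ΔQ r| * |r|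
        ≤ (2*CP) * (2*CP + 2*CQ) * 1 := by
          apply mul_le_mul _ _ (abs_nonneg _) (by positivity)
          · exact mul_le_mul h1 h2 (abs_nonneg _) (by positivity)
          · simpa using h3
      _ = (2*CP) * (2*CP + 2*CQ) := mul_one _
  have iQa : IntervalIntegrable (fun r => ΔQ r * (ΔP r - ΔQ r) * r) volume 0 1 := by
    refine aux_II ((hmQ.mul (hmP.sub hmQ)).mul measurable_id)
      (C := (2*CQ) * (2*CP + 2*CQ)) ?_
    intro r hr
    rw [abs_mul, abs_mul]
    have h1 := hbQ r hr
    have h2 : |ΔP r - ΔQ r| ≤ 2*CP + 2*CQ := by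
      calc |ΔP r - ΔQ r| ≤ |ΔP r| + |ΔQ r| := abs_sub _ _
        _ ≤ 2*CP + 2*CQ := add_le_add (hbP r hr) h1
    calc |ΔQ r| * |ΔP r - ΔQ r| * |r|
        ≤ (2*CQ) * (2*CP + 2*CQ) * 1 := by
          apply mul_le_mul _ _ (abs_nonneg _) (by positivity)
          · exact mul_le_mul h1 h2 (abs_nonneg _) (by positivity)
          · rw [abs_of_nonneg hr.1.le]; exact hr.2
      _ = (2*CQ) * (2*CP + 2*CQ) := mul_one _
  refine ⟨hφc, hφ0, hφ1, ?_, ?_⟩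
  · -- Navier norm of φ
    rw [NavierNormSq]
    have e1 : (∫ r in (0:ℝ)..1,
        ((φ r) ^ 2 + (deriv φ r) ^ 2 + (deriv (deriv φ) r + deriv φ r / r) ^ 2) * r)
        = ∫ r in (0:ℝ)..1, (((P r - Q r)^2 + (deriv P r - deriv Q r)^2
            + (ΔP r - ΔQ r)^2) * r) / c^2 := by
      refine intervalIntegral.integral_congr ?_
      intro r _
      simp only
      rw [hlapφ r, hdφ]
      simp only [hφdef]
      ring
    rw [e1, intervalIntegral.integral_div]
  · -- the Ipair difference identity
    rw [Ipair, Ipair]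
    have eX1 : (∫ r in (0:ℝ)..1,
        (deriv (deriv P) r + deriv P r / r) * (deriv (deriv φ) r + deriv φ r / r) * r)
        = (∫ r in (0:ℝ)..1, ΔP r * (ΔP r - ΔQ r) * r) / c := by
      rw [← intervalIntegral.integral_div]
      refine intervalIntegral.integral_congr ?_
      intro r _
      simp only
      rw [hlapφ r]
      ring
    have eX2 : (∫ r in (0:ℝ)..1,
        (deriv (deriv Q) r + deriv Q r / r) * (deriv (deriv φ) r + deriv φ r / r) * r)
        = (∫ r in (0:ℝ)..1, ΔQ r * (ΔP r - ΔQ r) * r) / c := by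
      rw [← intervalIntegral.integral_div]
      refine intervalIntegral.integral_congr ?_
      intro r _
      simp only
      rw [hlapφ r]
      ring
    have eXsub : (∫ r in (0:ℝ)..1, ΔP r * (ΔP r - ΔQ r) * r)
        - (∫ r in (0:ℝ)..1, ΔQ r * (ΔP r - ΔQ r) * r)
        = ∫ r in (0:ℝ)..1, (ΔP r - ΔQ r)^2 * r := by
      rw [← intervalIntegral.integral_sub iPa iQa]
      refine intervalIntegral.integral_congr ?_
      intro r _
      simp only
      ring
    have eY1 : (∫ r in (0:ℝ)..1, (deriv P r) ^ 2 * deriv φ r)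
        = (∫ r in (0:ℝ)..1, (deriv P r)^2 * (deriv P r - deriv Q r)) / c := by
      rw [← intervalIntegral.integral_div]
      refine intervalIntegral.integral_congr ?_
      intro r _
      simp only
      rw [hdφ]
      ring
    have eY2 : (∫ r in (0:ℝ)..1, (deriv Q r) ^ 2 * deriv φ r)
        = (∫ r in (0:ℝ)..1, (deriv Q r)^2 * (deriv P r - deriv Q r)) / c := by
      rw [← intervalIntegral.integral_div]
      refine intervalIntegral.integral_congr ?_
      intro r _
      simp only
      rw [hdφ]
      ring
    have iY1 : IntervalIntegrable (fun r => (deriv P r)^2 * (deriv P r - deriv Q r)) volume 0 1 :=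
      (((aux_dv hP).continuous.pow 2).mul
        ((aux_dv hP).continuous.sub (aux_dv hQ).continuous)).intervalIntegrable 0 1
    have iY2 : IntervalIntegrable (fun r => (deriv Q r)^2 * (deriv P r - deriv Q r)) volume 0 1 :=
      (((aux_dv hQ).continuous.pow 2).mul
        ((aux_dv hP).continuous.sub (aux_dv hQ).continuous)).intervalIntegrable 0 1
    have eYsub : (∫ r in (0:ℝ)..1, (deriv P r)^2 * (deriv P r - deriv Q r))
        - (∫ r in (0:ℝ)..1, (deriv Q r)^2 * (deriv P r - deriv Q r))
        = ∫ r in (0:ℝ)..1, ((deriv P r)^2 - (deriv Q r)^2) * (deriv P r - deriv Q r) := by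
      rw [← intervalIntegral.integral_sub iY1 iY2]
      refine intervalIntegral.integral_congr ?_
      intro r _
      simp only
      ring
    rw [eX1, eX2, eY1, eY2]
    have hgoalX : (∫ r in (0:ℝ)..1, ((deriv (deriv P) r + deriv P r / r)
        - (deriv (deriv Q) r + deriv Q r / r))^2 * r)
        = ∫ r in (0:ℝ)..1, (ΔP r - ΔQ r)^2 * r := rfl
    rw [hgoalX, ← eXsub, ← eYsub]
    ring

lemma aux_int_navier {v : ℝ → ℝ} (hv : ContDiff ℝ (⊤ : ℕ∞) v) (h0 : deriv v 0 = 0) :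
    IntervalIntegrable
      (fun r => ((v r) ^ 2 + (deriv v r) ^ 2 + (deriv (deriv v) r + deriv v r / r) ^ 2) * r)
      volume 0 1 := by
  obtain ⟨C, hC0, hCc, hCq⟩ := aux_bound hv h0
  set Δ : ℝ → ℝ := fun r => deriv (deriv v) r + deriv v r / r with hΔ
  have hΔbd : ∀ r ∈ Ioc (0:ℝ) 1, |Δ r| ≤ 2 * C := by
    intro r hr
    calc |Δ r| ≤ |deriv (deriv v) r| + |deriv v r / r| := abs_add_le _ _
      _ ≤ C + C := add_le_add (hCc r (Ioc_subset_Icc_self hr)).2.2 (hCq r hr)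
      _ = 2 * C := by ring
  refine aux_II ((((hv.continuous.measurable.pow_const 2).add
    ((measurable_deriv v).pow_const 2)).add ((aux_meas_lap v).pow_const 2)).mul measurable_id)
    (C := C^2 + C^2 + (2*C)^2) ?_
  intro r hr
  obtain ⟨hb1, hb2, hb3⟩ := hCc r (Ioc_subset_Icc_self hr)
  have h1 : (v r)^2 ≤ C^2 := aux_sq_le hb1
  have h2 : (deriv v r)^2 ≤ C^2 := aux_sq_le hb2
  have h3 : (Δ r)^2 ≤ (2*C)^2 := aux_sq_le (hΔbd r hr)
  have hnn : 0 ≤ ((v r) ^ 2 + (deriv v r) ^ 2 + (Δ r) ^ 2) * r := by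
    apply mul_nonneg _ hr.1.le
    positivity
  rw [abs_of_nonneg hnn]
  nlinarith [hr.1.le, hr.2, sq_nonneg (v r), sq_nonneg (deriv v r), sq_nonneg (Δ r)]

set_option maxHeartbeats 1000000 in
/-- Every bounded Palais–Smale sequence for `I_λ` (Navier boundary conditions)
admits a subsequence which is Cauchy in the `L²(r dr)` norm of the radial Laplacian. -/
theorem stmt14 (lam : ℝ) (hlam : 0 ≤ lam) (f : ℝ → ℝ)
    (hf_int : IntegrableOn (fun r => f r * r) (Ioc 0 1) volume) (L : ℝ)
    (u : ℕ → ℝ → ℝ) (hsm : ∀ n, ContDiff ℝ (⊤ : ℕ∞) (u n))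
    (hbc : ∀ n, deriv (u n) 0 = 0 ∧ u n 1 = 0)
    (hbdd : ∃ B : ℝ, ∀ n, NavierNormSq (u n) ≤ B)
    (hPS1 : Tendsto (fun n => Ifun lam f (u n)) atTop (nhds L))
    (hPS2 : ∀ ε > (0:ℝ), ∃ N : ℕ, ∀ n ≥ N, ∀ φ : ℝ → ℝ,
      ContDiff ℝ (⊤ : ℕ∞) φ → deriv φ 0 = 0 → φ 1 = 0 →
      NavierNormSq φ ≤ 1 → |Ipair lam f (u n) φ| ≤ ε) :
    ∃ ns : ℕ → ℕ, StrictMono ns ∧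
      ∀ ε > (0:ℝ), ∃ N : ℕ, ∀ m ≥ N, ∀ n ≥ N,
        Real.sqrt (∫ r in (0:ℝ)..1,
          ((deriv (deriv (u (ns m))) r + deriv (u (ns m)) r / r)
            - (deriv (deriv (u (ns n))) r + deriv (u (ns n)) r / r)) ^ 2 * r) < ε := by
  classical
  obtain ⟨B₀, hB₀⟩ := hbdd
  set B := max B₀ 0 with hBdef
  have hB0 : (0:ℝ) ≤ B := le_max_right _ _
  have hB : ∀ n, NavierNormSq (u n) ≤ B := fun n => le_trans (hB₀ n) (le_max_left _ _)
  set M := Real.sqrt B with hMdef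
  have hM0 : 0 ≤ M := Real.sqrt_nonneg _
  have hMsq : M^2 = B := Real.sq_sqrt hB0
  have hlap : ∀ n, ∫ s in (0:ℝ)..1,
      s * (deriv (deriv (u n)) s + deriv (u n) s / s)^2 ≤ B := by
    intro n
    have h := hB n
    rw [NavierNormSq] at h
    exact le_trans (aux_lap_le_navier (hsm n) (hbc n).1) h
  have hM : ∀ n, ∀ r ∈ Icc (0:ℝ) 1, |deriv (u n) r| ≤ M := fun n =>
    aux_deriv_bdd (hsm n) (hbc n).1 (hlap n)
  obtain ⟨ns, hns, g, hgmeas, hgbd, hDCT⟩ := aux_extract u hsm hbc B hB0 hB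
  refine ⟨ns, hns, ?_⟩
  intro ε hε
  set c := 2*M + 1 with hcdef
  have hc : 0 < c := by linarith
  set ε' := ε^2/(8*c) with hε'def
  have hε'pos : 0 < ε' := by positivity
  obtain ⟨N₁, hN₁⟩ := hPS2 ε' hε'pos
  set η := ε^2/(8*(4*M^2+1)) with hηdef
  have hηpos : 0 < η := by positivity
  obtain ⟨N₂, hN₂⟩ : ∃ N₂ : ℕ, ∀ i ≥ N₂,
      (∫ r in Ioc (0:ℝ) 1, |deriv (u (ns i)) r - g r|) < η := by
    obtain ⟨N, hN⟩ := (Metric.tendsto_atTop.mp hDCT) η hηpos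
    refine ⟨N, fun i hi => ?_⟩
    have := hN i hi
    rw [Real.dist_eq, sub_zero] at this
    exact lt_of_abs_lt this
  refine ⟨max N₁ N₂, fun m hm n hn => ?_⟩
  have hJm := hN₂ m (le_trans (le_max_right N₁ N₂) hm)
  have hJn := hN₂ n (le_trans (le_max_right N₁ N₂) hn)
  set P := u (ns m) with hPdef
  set Q := u (ns n) with hQdef
  have hsP : ContDiff ℝ (⊤ : ℕ∞) P := hsm _
  have hsQ : ContDiff ℝ (⊤ : ℕ∞) Q := hsm _
  have hP0 : deriv P 0 = 0 := (hbc _).1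
  have hQ0 : deriv Q 0 = 0 := (hbc _).1
  obtain ⟨hφc, hφ0, hφ1, hφnorm, hφdiff⟩ :=
    aux_phi lam f P Q hsP hsQ hP0 hQ0 (hbc _).2 (hbc _).2 hc
  set φ : ℝ → ℝ := fun r => (P r - Q r)/c with hφdef
  -- the W bound : NavierNormSq φ ≤ 1
  have hφn1 : NavierNormSq φ ≤ 1 := by
    rw [hφnorm, div_le_one (by positivity : (0:ℝ) < c^2)]
    -- ∫ W ≤ 2 (N P + N Q) ≤ 4 B ≤ c²
    obtain ⟨CP, hCP0, hCPc, hCPq⟩ := aux_bound hsP hP0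
    obtain ⟨CQ, hCQ0, hCQc, hCQq⟩ := aux_bound hsQ hQ0
    have hbP : ∀ r ∈ Ioc (0:ℝ) 1, |deriv (deriv P) r + deriv P r / r| ≤ 2*CP := by
      intro r hr
      calc |deriv (deriv P) r + deriv P r / r|
          ≤ |deriv (deriv P) r| + |deriv P r / r| := abs_add_le _ _
        _ ≤ CP + CP := add_le_add (hCPc r (Ioc_subset_Icc_self hr)).2.2 (hCPq r hr)
        _ = 2*CP := by ring
    have hbQ : ∀ r ∈ Ioc (0:ℝ) 1, |deriv (deriv Q) r + deriv Q r / r| ≤ 2*CQ := by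
      intro r hr
      calc |deriv (deriv Q) r + deriv Q r / r|
          ≤ |deriv (deriv Q) r| + |deriv Q r / r| := abs_add_le _ _
        _ ≤ CQ + CQ := add_le_add (hCQc r (Ioc_subset_Icc_self hr)).2.2 (hCQq r hr)
        _ = 2*CQ := by ring
    have iW : IntervalIntegrable (fun r => ((P r - Q r)^2 + (deriv P r - deriv Q r)^2
        + ((deriv (deriv P) r + deriv P r / r)
          - (deriv (deriv Q) r + deriv Q r / r))^2) * r) volume 0 1 := by
      refine aux_II (Measurable.mul (Measurable.add (Measurable.add
        ((hsP.continuous.measurable.sub hsQ.continuous.measurable).pow_const 2)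
        (((measurable_deriv P).sub (measurable_deriv Q)).pow_const 2))
        (((aux_meas_lap P).sub (aux_meas_lap Q)).pow_const 2)) measurable_id)
        (C := (CP+CQ)^2 + (CP+CQ)^2 + (2*CP+2*CQ)^2) ?_
      intro r hr
      obtain ⟨hp1, hp2, hp3⟩ := hCPc r (Ioc_subset_Icc_self hr)
      obtain ⟨hq1, hq2, hq3⟩ := hCQc r (Ioc_subset_Icc_self hr)
      have h1 : (P r - Q r)^2 ≤ (CP+CQ)^2 :=
        aux_sq_le (le_trans (abs_sub _ _) (add_le_add hp1 hq1))
      have h2 : (deriv P r - deriv Q r)^2 ≤ (CP+CQ)^2 :=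
        aux_sq_le (le_trans (abs_sub _ _) (add_le_add hp2 hq2))
      have h3 : ((deriv (deriv P) r + deriv P r / r)
          - (deriv (deriv Q) r + deriv Q r / r))^2 ≤ (2*CP+2*CQ)^2 :=
        aux_sq_le (le_trans (abs_sub _ _) (add_le_add (hbP r hr) (hbQ r hr)))
      have hnn : 0 ≤ ((P r - Q r)^2 + (deriv P r - deriv Q r)^2
          + ((deriv (deriv P) r + deriv P r / r)
            - (deriv (deriv Q) r + deriv Q r / r))^2) * r := by
        apply mul_nonneg _ hr.1.le
        positivity
      rw [abs_of_nonneg hnn]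
      have hnn2 : (0:ℝ) ≤ (P r - Q r)^2 + (deriv P r - deriv Q r)^2
          + ((deriv (deriv P) r + deriv P r / r)
            - (deriv (deriv Q) r + deriv Q r / r))^2 := by positivity
      calc ((P r - Q r)^2 + (deriv P r - deriv Q r)^2
          + ((deriv (deriv P) r + deriv P r / r)
            - (deriv (deriv Q) r + deriv Q r / r))^2) * r
          ≤ ((P r - Q r)^2 + (deriv P r - deriv Q r)^2
          + ((deriv (deriv P) r + deriv P r / r)
            - (deriv (deriv Q) r + deriv Q r / r))^2) * 1 :=
            mul_le_mul_of_nonneg_left hr.2 hnn2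
        _ = (P r - Q r)^2 + (deriv P r - deriv Q r)^2
          + ((deriv (deriv P) r + deriv P r / r)
            - (deriv (deriv Q) r + deriv Q r / r))^2 := mul_one _
        _ ≤ (CP+CQ)^2 + (CP+CQ)^2 + (2*CP+2*CQ)^2 := by linarith
    have iNP := aux_int_navier hsP hP0
    have iNQ := aux_int_navier hsQ hQ0
    have hmono : (∫ r in (0:ℝ)..1, ((P r - Q r)^2 + (deriv P r - deriv Q r)^2
        + ((deriv (deriv P) r + deriv P r / r)
          - (deriv (deriv Q) r + deriv Q r / r))^2) * r)
        ≤ ∫ r in (0:ℝ)..1, (2:ℝ) *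
            ((((P r) ^ 2 + (deriv P r) ^ 2 + (deriv (deriv P) r + deriv P r / r) ^ 2) * r)
            + (((Q r) ^ 2 + (deriv Q r) ^ 2 + (deriv (deriv Q) r + deriv Q r / r) ^ 2) * r)) := by
      refine intervalIntegral.integral_mono_on (by norm_num) iW ((iNP.add iNQ).const_mul 2) ?_
      intro r hr
      have key : (P r - Q r)^2 + (deriv P r - deriv Q r)^2
          + ((deriv (deriv P) r + deriv P r / r)
            - (deriv (deriv Q) r + deriv Q r / r))^2
          ≤ 2 * (((P r) ^ 2 + (deriv P r) ^ 2 + (deriv (deriv P) r + deriv P r / r) ^ 2)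
            + ((Q r) ^ 2 + (deriv Q r) ^ 2 + (deriv (deriv Q) r + deriv Q r / r) ^ 2)) := by
        nlinarith [sq_nonneg (P r + Q r), sq_nonneg (deriv P r + deriv Q r),
          sq_nonneg ((deriv (deriv P) r + deriv P r / r)
            + (deriv (deriv Q) r + deriv Q r / r))]
      calc ((P r - Q r)^2 + (deriv P r - deriv Q r)^2
          + ((deriv (deriv P) r + deriv P r / r)
            - (deriv (deriv Q) r + deriv Q r / r))^2) * r
          ≤ (2 * (((P r) ^ 2 + (deriv P r) ^ 2 + (deriv (deriv P) r + deriv P r / r) ^ 2)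
            + ((Q r) ^ 2 + (deriv Q r) ^ 2 + (deriv (deriv Q) r + deriv Q r / r) ^ 2))) * r :=
            mul_le_mul_of_nonneg_right key hr.1
        _ = 2 * ((((P r) ^ 2 + (deriv P r) ^ 2 + (deriv (deriv P) r + deriv P r / r) ^ 2) * r)
            + (((Q r) ^ 2 + (deriv Q r) ^ 2 + (deriv (deriv Q) r + deriv Q r / r) ^ 2) * r)) := by
            ring
    have hsum : (∫ r in (0:ℝ)..1, (2:ℝ) *
        ((((P r) ^ 2 + (deriv P r) ^ 2 + (deriv (deriv P) r + deriv P r / r) ^ 2) * r)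
        + (((Q r) ^ 2 + (deriv Q r) ^ 2 + (deriv (deriv Q) r + deriv Q r / r) ^ 2) * r)))
        = 2 * (NavierNormSq P + NavierNormSq Q) := by
      rw [intervalIntegral.integral_const_mul, intervalIntegral.integral_add iNP iNQ]
      rw [NavierNormSq, NavierNormSq]
    have hc2 : 4 * B ≤ c^2 := by nlinarith [hM0, hMsq]
    calc (∫ r in (0:ℝ)..1, ((P r - Q r)^2 + (deriv P r - deriv Q r)^2
        + ((deriv (deriv P) r + deriv P r / r)
          - (deriv (deriv Q) r + deriv Q r / r))^2) * r)
        ≤ 2 * (NavierNormSq P + NavierNormSq Q) := by rw [← hsum]; exact hmono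
      _ ≤ 2 * (B + B) := by
          have := hB (ns m); have := hB (ns n)
          apply mul_le_mul_of_nonneg_left _ (by norm_num : (0:ℝ) ≤ 2)
          exact add_le_add (hB (ns m)) (hB (ns n))
      _ = 4 * B := by ring
      _ ≤ c^2 := hc2
  -- Palais-Smale bounds
  have hmge : ns m ≥ N₁ := le_trans (le_trans (le_max_left N₁ N₂) hm) hns.le_apply
  have hnge : ns n ≥ N₁ := le_trans (le_trans (le_max_left N₁ N₂) hn) hns.le_apply
  have hIm : |Ipair lam f P φ| ≤ ε' := hN₁ (ns m) hmge φ hφc hφ0 hφ1 hφn1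
  have hIn : |Ipair lam f Q φ| ≤ ε' := hN₁ (ns n) hnge φ hφc hφ0 hφ1 hφn1
  -- the cubic term bound
  set T := ∫ r in (0:ℝ)..1, ((deriv P r)^2 - (deriv Q r)^2) * (deriv P r - deriv Q r) with hTdef
  have hMP : ∀ r ∈ Icc (0:ℝ) 1, |deriv P r| ≤ M := hM (ns m)
  have hMQ : ∀ r ∈ Icc (0:ℝ) 1, |deriv Q r| ≤ M := hM (ns n)
  have hTb : |T| ≤ 4*M^2 * ((∫ r in Ioc (0:ℝ) 1, |deriv P r - g r|)
      + (∫ r in Ioc (0:ℝ) 1, |deriv Q r - g r|)) := by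
    have contP := (aux_dv hsP).continuous
    have contQ := (aux_dv hsQ).continuous
    have s1 : |T| ≤ ∫ r in (0:ℝ)..1,
        |((deriv P r)^2 - (deriv Q r)^2) * (deriv P r - deriv Q r)| :=
      intervalIntegral.abs_integral_le_integral_abs (by norm_num)
    have s2 : (∫ r in (0:ℝ)..1,
        |((deriv P r)^2 - (deriv Q r)^2) * (deriv P r - deriv Q r)|)
        ≤ ∫ r in (0:ℝ)..1, 4*M^2 * |deriv P r - deriv Q r| := by
      refine intervalIntegral.integral_mono_on (by norm_num)
        ((((contP.pow 2).sub (contQ.pow 2)).mul (contP.sub contQ)).abs.intervalIntegrable 0 1)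
        ((continuous_const.mul ((contP.sub contQ).abs)).intervalIntegrable 0 1) ?_
      intro r hr
      have h1 := hMP r hr
      have h2 := hMQ r hr
      have e : ((deriv P r)^2 - (deriv Q r)^2) * (deriv P r - deriv Q r)
          = (deriv P r + deriv Q r) * ((deriv P r - deriv Q r) * (deriv P r - deriv Q r)) := by
        ring
      rw [e, abs_mul, abs_mul]
      have hsumb : |deriv P r + deriv Q r| ≤ 2*M :=
        le_trans (abs_add_le _ _) (by linarith)
      have hdiffb : |deriv P r - deriv Q r| ≤ 2*M :=
        le_trans (abs_sub _ _) (by linarith)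
      calc |deriv P r + deriv Q r| * (|deriv P r - deriv Q r| * |deriv P r - deriv Q r|)
          ≤ (2*M) * ((2*M) * |deriv P r - deriv Q r|) := by
            apply mul_le_mul hsumb _ (by positivity) (by positivity)
            exact mul_le_mul_of_nonneg_right hdiffb (abs_nonneg _)
        _ = 4*M^2 * |deriv P r - deriv Q r| := by ring
    have s3 : (∫ r in (0:ℝ)..1, 4*M^2 * |deriv P r - deriv Q r|)
        = 4*M^2 * ∫ r in (0:ℝ)..1, |deriv P r - deriv Q r| :=
      intervalIntegral.integral_const_mul _ _
    have s4 : (∫ r in (0:ℝ)..1, |deriv P r - deriv Q r|)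
        = ∫ r in Ioc (0:ℝ) 1, |deriv P r - deriv Q r| :=
      intervalIntegral.integral_of_le (by norm_num)
    have iPg : IntegrableOn (fun r => |deriv P r - g r|) (Ioc (0:ℝ) 1) volume := by
      refine aux_intOn_of_bdd ((measurable_deriv P).sub hgmeas).abs (C := 2*M) ?_
      intro r hr
      rw [abs_abs]
      calc |deriv P r - g r| ≤ |deriv P r| + |g r| := abs_sub _ _
        _ ≤ M + M := add_le_add (hMP r (Ioc_subset_Icc_self hr)) (hgbd r)
        _ = 2*M := by ring
    have iQg : IntegrableOn (fun r => |deriv Q r - g r|) (Ioc (0:ℝ) 1) volume := by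
      refine aux_intOn_of_bdd ((measurable_deriv Q).sub hgmeas).abs (C := 2*M) ?_
      intro r hr
      rw [abs_abs]
      calc |deriv Q r - g r| ≤ |deriv Q r| + |g r| := abs_sub _ _
        _ ≤ M + M := add_le_add (hMQ r (Ioc_subset_Icc_self hr)) (hgbd r)
        _ = 2*M := by ring
    have s5 : (∫ r in Ioc (0:ℝ) 1, |deriv P r - deriv Q r|)
        ≤ ∫ r in Ioc (0:ℝ) 1, (|deriv P r - g r| + |deriv Q r - g r|) := by
      refine setIntegral_mono_on
        (aux_intOn_of_bdd ((measurable_deriv P).sub (measurable_deriv Q)).abs (C := 2*M) (by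
          intro r hr
          rw [abs_abs]
          calc |deriv P r - deriv Q r| ≤ |deriv P r| + |deriv Q r| := abs_sub _ _
            _ ≤ M + M := add_le_add (hMP r (Ioc_subset_Icc_self hr))
                (hMQ r (Ioc_subset_Icc_self hr))
            _ = 2*M := by ring))
        (iPg.add iQg) measurableSet_Ioc ?_
      intro r _
      calc |deriv P r - deriv Q r| ≤ |deriv P r - g r| + |g r - deriv Q r| := abs_sub_le _ _ _
        _ = |deriv P r - g r| + |deriv Q r - g r| := by rw [abs_sub_comm (g r)]
    have s6 : (∫ r in Ioc (0:ℝ) 1, (|deriv P r - g r| + |deriv Q r - g r|))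
        = (∫ r in Ioc (0:ℝ) 1, |deriv P r - g r|)
          + ∫ r in Ioc (0:ℝ) 1, |deriv Q r - g r| :=
      integral_add iPg iQg
    calc |T| ≤ ∫ r in (0:ℝ)..1,
          |((deriv P r)^2 - (deriv Q r)^2) * (deriv P r - deriv Q r)| := s1
      _ ≤ ∫ r in (0:ℝ)..1, 4*M^2 * |deriv P r - deriv Q r| := s2
      _ = 4*M^2 * ∫ r in Ioc (0:ℝ) 1, |deriv P r - deriv Q r| := by rw [s3, s4]
      _ ≤ 4*M^2 * ((∫ r in Ioc (0:ℝ) 1, |deriv P r - g r|)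
          + ∫ r in Ioc (0:ℝ) 1, |deriv Q r - g r|) := by
          apply mul_le_mul_of_nonneg_left _ (by positivity)
          rw [← s6]
          exact s5
  -- assemble
  set D2 := ∫ r in (0:ℝ)..1, ((deriv (deriv P) r + deriv P r / r)
      - (deriv (deriv Q) r + deriv Q r / r))^2 * r with hD2def
  have hkey : c * (Ipair lam f P φ - Ipair lam f Q φ) = D2 + (1/2) * T := by
    rw [hφdiff]
    field_simp
  have hTq : |T| ≤ ε^2/4 := by
    have hηid : (4*M^2+1) * η = ε^2/8 := by
      rw [hηdef]
      field_simp
    have h8 : 4*M^2 * ((∫ r in Ioc (0:ℝ) 1, |deriv P r - g r|)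
        + ∫ r in Ioc (0:ℝ) 1, |deriv Q r - g r|) ≤ 4*M^2 * (2*η) := by
      apply mul_le_mul_of_nonneg_left _ (by positivity)
      have := hJm
      have := hJn
      linarith
    have h9 : 4*M^2 * (2*η) ≤ ε^2/4 := by nlinarith [sq_nonneg M, hηpos.le, hηid]
    linarith [hTb]
  have hcε : c * (2*ε') = ε^2/4 := by
    rw [hε'def]
    field_simp
    ring
  have hD2lt : D2 < ε^2 := by
    have h1 : c * (Ipair lam f P φ - Ipair lam f Q φ) ≤ c * (2*ε') := by
      apply mul_le_mul_of_nonneg_left _ hc.le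
      have h2 := abs_le.mp hIm
      have h3 := abs_le.mp hIn
      linarith [h2.1, h2.2, h3.1, h3.2]
    have h3 : D2 = c * (Ipair lam f P φ - Ipair lam f Q φ) - (1/2) * T := by linarith [hkey]
    have h4 : -(1/2) * T ≤ (1/2) * |T| := by
      have := neg_abs_le T
      linarith
    have h5 : (0:ℝ) < ε^2 := by positivity
    calc D2 = c * (Ipair lam f P φ - Ipair lam f Q φ) - (1/2) * T := h3
      _ ≤ c * (2*ε') + (1/2) * |T| := by
          have h6 := add_le_add h1 h4
          linarith [h6]
      _ ≤ ε^2/4 + (1/2) * (ε^2/4) := by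
          rw [hcε]
          linarith [hTq]
      _ < ε^2 := by linarith
  rw [Real.sqrt_lt' hε]
  exact hD2lt
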